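/- There exists a constant C > 0 such that for all integers n ≥ 2 and all integers k with 1 ≤ k ≤ n−1: | log( ∏_{j=1}^{k} 2·sin(jπ/n) ) + (n/π)·Λ(kπ/n) | ≤ C·log n. [The Garoufalidis–Lê asymptotic log|{⌊α⌋}!| = −(n/π)Λ(πα/n) + O(log n), used in the proof of Theorem 6.2.] -/

import Mathlib

open Finset Filter Real

/-- The sine factorial `(k)!_n = ∏_{j=1}^k 2 sin(jπ/n)`. -/
noncomputable def sf (n k : ℕ) : ℝ :=
  ∏ j ∈ Finset.Icc 1 k, 2 * Real.sin (j * Real.pi / n)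

/-- The Lobachevsky function `Λ(x) = -∫₀ˣ log|2 sin t| dt`. -/
noncomputable def lob (x : ℝ) : ℝ := -∫ t in (0:ℝ)..x, Real.log |2 * Real.sin t|

open MeasureTheory


lemma harmonic_le (m : ℕ) : ∑ i ∈ Finset.Icc 1 m, (1:ℝ)/i ≤ 1 + Real.log m := by
  induction m with
  | zero => simp
  | succ m ih =>
    rw [Finset.sum_Icc_succ_top (by omega)]
    rcases Nat.eq_zero_or_pos m with hm | hm
    · subst hm; norm_num
    have hm1 : (0:ℝ) < m := by positivity
    have key : Real.log m - Real.log (m+1) ≤ -(1/(m+1)) := by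
      have h1 : Real.log ((m:ℝ)/(m+1)) ≤ (m:ℝ)/(m+1) - 1 :=
        Real.log_le_sub_one_of_pos (by positivity)
      rw [Real.log_div (by positivity) (by positivity)] at h1
      have : (m:ℝ)/(m+1) - 1 = -(1/(m+1)) := by field_simp; ring
      linarith [this ▸ h1]
    push_cast
    push_cast at ih
    linarith

lemma intervalIntegrable_log0 {b : ℝ} (hb : 0 ≤ b) :
    IntervalIntegrable Real.log volume 0 b := by
  have hg : IntervalIntegrable (fun x : ℝ => 2 * x ^ (-(1/2) : ℝ) + x) volume 0 b :=
    ((intervalIntegral.intervalIntegrable_rpow' (by norm_num)).const_mul 2).add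
      intervalIntegral.intervalIntegrable_id
  refine hg.mono_fun (Real.measurable_log.aestronglyMeasurable) ?_
  refine ((MeasureTheory.ae_restrict_iff' measurableSet_uIoc).2
    (MeasureTheory.ae_of_all _ fun x hx => ?_))
  rw [Set.uIoc_of_le hb] at hx
  obtain ⟨hx0, _⟩ := hx
  have hrp : (0:ℝ) < x ^ (-(1/2) : ℝ) := Real.rpow_pos_of_pos hx0 _
  show ‖Real.log x‖ ≤ ‖2 * x ^ (-(1/2):ℝ) + x‖
  rw [Real.norm_eq_abs, Real.norm_eq_abs]
  rw [abs_of_nonneg (by positivity : (0:ℝ) ≤ 2 * x ^ (-(1/2):ℝ) + x)]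
  rcases le_or_gt 1 x with h1 | h1
  · have : Real.log x ≤ x - 1 := by
      have := Real.log_le_sub_one_of_pos (lt_of_lt_of_le one_pos h1); linarith
    rw [abs_of_nonneg (Real.log_nonneg h1)]
    linarith
  · rw [abs_of_nonpos (Real.log_nonpos (le_of_lt hx0) (le_of_lt h1))]
    have hs : Real.log (x ^ (-(1/2) : ℝ)) ≤ x ^ (-(1/2):ℝ) - 1 :=
      Real.log_le_sub_one_of_pos hrp
    rw [Real.log_rpow hx0] at hs
    nlinarith

lemma integral_log0 {b : ℝ} (hb : 0 ≤ b) :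
    ∫ t in (0:ℝ)..b, Real.log t = b * Real.log b - b := by
  have := intervalIntegral.integral_eq_sub_of_hasDeriv_right_of_le hb
    (f := fun x => x * Real.log x - x) (f' := Real.log)
    ((Real.continuous_mul_log.sub continuous_id).continuousOn) ?_ (intervalIntegrable_log0 hb)
  · simpa using this
  · intro x hx
    have hx0 : x ≠ 0 := ne_of_gt hx.1
    have h1 : HasDerivAt (fun x : ℝ => x * Real.log x - x) (Real.log x) x := by
      have := (Real.hasDerivAt_mul_log hx0).sub (hasDerivAt_id' x)
      rw [add_sub_cancel_right] at this
      exact this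
    exact h1.hasDerivWithinAt

noncomputable def flog : ℝ → ℝ := fun t => Real.log (2 * Real.sin t)

lemma flog_integrable0 {b : ℝ} (hb0 : 0 ≤ b) (hb : b ≤ Real.pi/2) :
    IntervalIntegrable flog volume 0 b := by
  have hg : IntervalIntegrable (fun x : ℝ => |Real.log x| + Real.log 2) volume 0 b :=
    (intervalIntegrable_log0 hb0).abs.add intervalIntegrable_const
  refine hg.mono_fun ((Real.measurable_log.comp
    ((continuous_const.mul Real.continuous_sin).measurable)).aestronglyMeasurable) ?_
  refine ((MeasureTheory.ae_restrict_iff' measurableSet_uIoc).2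
    (MeasureTheory.ae_of_all _ fun t ht => ?_))
  rw [Set.uIoc_of_le hb0] at ht
  obtain ⟨ht0, htb⟩ := ht
  have htpi : t ≤ Real.pi/2 := le_trans htb hb
  have hsin : 2/Real.pi * t ≤ Real.sin t := Real.mul_le_sin (le_of_lt ht0) htpi
  have hsinle : Real.sin t ≤ t := Real.sin_le (le_of_lt ht0)
  have hpi := Real.pi_pos
  have hsinpos : 0 < Real.sin t := lt_of_lt_of_le (by positivity) hsin
  -- log(4/π) + log t ≤ flog t ≤ log 2 + log t
  have hlow : Real.log (4/Real.pi) + Real.log t ≤ flog t := by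
    rw [← Real.log_mul (by positivity) (ne_of_gt ht0)]
    have h := mul_le_mul_of_nonneg_left hsin (by norm_num : (0:ℝ) ≤ 2)
    have e : 2 * (2 / Real.pi * t) = 4 / Real.pi * t := by ring
    refine Real.log_le_log (by positivity) (by linarith [e ▸ h])
  have hhigh : flog t ≤ Real.log 2 + Real.log t := by
    rw [← Real.log_mul (by norm_num) (ne_of_gt ht0)]
    exact Real.log_le_log (by positivity) (by linarith)
  have h4pi0 : (0:ℝ) ≤ Real.log (4/Real.pi) :=
    Real.log_nonneg (by rw [le_div_iff₀ hpi]; linarith [Real.pi_lt_d2])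
  have h4pi2 : Real.log (4/Real.pi) ≤ Real.log 2 :=
    Real.log_le_log (div_pos (by norm_num) hpi) (by rw [div_le_iff₀ hpi]; linarith [Real.pi_gt_three])
  show ‖flog t‖ ≤ ‖|Real.log t| + Real.log 2‖
  have hlog2 : (0:ℝ) < Real.log 2 := Real.log_pos (by norm_num)
  rw [Real.norm_eq_abs, Real.norm_eq_abs,
    abs_of_nonneg (add_nonneg (abs_nonneg _) hlog2.le)]
  rcases abs_cases (Real.log t) with ⟨he, _⟩ | ⟨he, _⟩ <;> rcases abs_cases (flog t) with
    ⟨hf, _⟩ | ⟨hf, _⟩ <;> linarith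

lemma flog_integrable_mid {a b : ℝ} (ha : 0 < a) (hab : a ≤ b) (hb : b < Real.pi) :
    IntervalIntegrable flog volume a b := by
  refine (ContinuousOn.intervalIntegrable ?_)
  intro t ht
  rw [Set.uIcc_of_le hab] at ht
  have hsinpos : 0 < Real.sin t :=
    Real.sin_pos_of_pos_of_lt_pi (lt_of_lt_of_le ha ht.1) (lt_of_le_of_lt ht.2 hb)
  have hc : ContinuousAt (fun x : ℝ => 2 * Real.sin x) t :=
    (continuous_const.mul Real.continuous_sin).continuousAt
  exact (ContinuousAt.comp (f := fun x : ℝ => 2 * Real.sin x)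
    (Real.continuousAt_log (ne_of_gt (show (0:ℝ) < 2 * Real.sin t by linarith))) hc).continuousWithinAt

lemma one_div_sin_le {t : ℝ} (ht0 : 0 < t) (htpi : t < Real.pi) :
    1 / Real.sin t ≤ (Real.pi/2) * (1/t + 1/(Real.pi - t)) := by
  have hpi := Real.pi_pos
  have hsinpos : 0 < Real.sin t := Real.sin_pos_of_pos_of_lt_pi ht0 htpi
  rcases le_or_gt t (Real.pi/2) with h | h
  · have hsin : 2/Real.pi * t ≤ Real.sin t := Real.mul_le_sin (le_of_lt ht0) h
    have h1 : 1 / Real.sin t ≤ 1 / (2/Real.pi * t) :=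
      one_div_le_one_div_of_le (by positivity) hsin
    have h2 : 1 / (2/Real.pi * t) = (Real.pi/2) * (1/t) := by
      field_simp
    have h3 : (0:ℝ) < 1/(Real.pi - t) := one_div_pos.2 (by linarith)
    nlinarith
  · have h2 : Real.pi - t ≤ Real.pi/2 := by linarith
    have h0 : 0 < Real.pi - t := by linarith
    have hsin : 2/Real.pi * (Real.pi - t) ≤ Real.sin (Real.pi - t) :=
      Real.mul_le_sin (le_of_lt h0) h2
    rw [Real.sin_pi_sub] at hsin
    have h1 : 1 / Real.sin t ≤ 1 / (2/Real.pi * (Real.pi - t)) :=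
      one_div_le_one_div_of_le (by positivity) hsin
    have h2' : 1 / (2/Real.pi * (Real.pi - t)) = (Real.pi/2) * (1/(Real.pi - t)) := by
      field_simp
    have h3 : (0:ℝ) < 1/t := by positivity
    nlinarith

lemma flog_lip {a b M : ℝ} (ha : 0 < a) (hab : a ≤ b) (hb : b < Real.pi)
    (hM : ∀ t ∈ Set.Icc a b, 1 / Real.sin t ≤ M) :
    ∀ t ∈ Set.Icc a b, |flog b - flog t| ≤ M * (b - a) := by
  intro t ht
  have key : ∀ x ∈ Set.Icc a b, HasDerivWithinAt flog (Real.cos x / Real.sin x) (Set.Icc a b) x := by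
    intro x hx
    have hsinpos : 0 < Real.sin x :=
      Real.sin_pos_of_pos_of_lt_pi (lt_of_lt_of_le ha hx.1) (lt_of_le_of_lt hx.2 hb)
    have h1 : HasDerivAt (fun x : ℝ => 2 * Real.sin x) (2 * Real.cos x) x :=
      (Real.hasDerivAt_sin x).const_mul 2
    have h2 := h1.log (by positivity)
    have : 2 * Real.cos x / (2 * Real.sin x) = Real.cos x / Real.sin x := by
      rw [mul_div_mul_left _ _ (by norm_num : (2:ℝ) ≠ 0)]
    rw [this] at h2
    exact h2.hasDerivWithinAt
  have bound : ∀ x ∈ Set.Icc a b, ‖Real.cos x / Real.sin x‖ ≤ M := by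
    intro x hx
    have hsinpos : 0 < Real.sin x :=
      Real.sin_pos_of_pos_of_lt_pi (lt_of_lt_of_le ha hx.1) (lt_of_le_of_lt hx.2 hb)
    rw [Real.norm_eq_abs, abs_div, abs_of_pos hsinpos]
    refine le_trans ?_ (hM x hx)
    rw [div_le_div_iff₀ hsinpos hsinpos]
    have := abs_cos_le_one x
    nlinarith
  have := (convex_Icc a b).norm_image_sub_le_of_norm_hasDerivWithin_le key bound
    ht (Set.right_mem_Icc.2 hab)
  rw [Real.norm_eq_abs, Real.norm_eq_abs] at this
  refine le_trans this ?_
  have hsb : 0 < Real.sin b :=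
    Real.sin_pos_of_pos_of_lt_pi (lt_of_lt_of_le ha hab) hb
  have hM0 : 0 ≤ M := le_trans (one_div_pos.2 hsb).le (hM b (Set.right_mem_Icc.2 hab))
  have : |b - t| ≤ b - a := by rw [abs_of_nonneg (by linarith [ht.2])]; linarith [ht.1]
  nlinarith

set_option maxHeartbeats 1000000 in
theorem garoufalidis_le_asymptotics :
    ∃ C : ℝ, 0 < C ∧ ∀ n : ℕ, 2 ≤ n → ∀ k : ℕ, 1 ≤ k → k ≤ n - 1 →
      |Real.log (sf n k) + ((n : ℝ) / Real.pi) * lob (k * Real.pi / n)| ≤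
        C * Real.log n := by
  refine ⟨20, by norm_num, ?_⟩
  intro n hn k hk1 hk2
  have hpi := Real.pi_pos
  have hn2 : (2:ℝ) ≤ (n:ℝ) := by exact_mod_cast hn
  have hn0 : (0:ℝ) < n := by linarith
  set h : ℝ := Real.pi / n with hh
  have hh0 : 0 < h := by positivity
  have hkn : k + 1 ≤ n := by omega
  have hkR : (k:ℝ) + 1 ≤ n := by exact_mod_cast hkn
  have hnh : ((n:ℝ)/Real.pi) * h = 1 := by rw [hh]; field_simp
  have hhalf : h ≤ Real.pi/2 := by
    rw [hh, div_le_div_iff₀ hn0 (by norm_num)]; nlinarith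
  have hn1h : ((n:ℝ)-1) * h = Real.pi - h := by rw [hh]; field_simp
  -- log of sf as a sum
  have hgrid : ∀ j ∈ Finset.Icc 1 k, (0:ℝ) < (j:ℝ)*h ∧ (j:ℝ)*h < Real.pi := by
    intro j hj
    simp only [Finset.mem_Icc] at hj
    have hj1 : (1:ℝ) ≤ j := by exact_mod_cast hj.1
    have hjk : (j:ℝ) ≤ k := by exact_mod_cast hj.2
    constructor
    · positivity
    · nlinarith
  have hgridpos : ∀ j ∈ Finset.Icc 1 k, (0:ℝ) < 2 * Real.sin ((j:ℝ) * Real.pi / n) := by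
    intro j hj
    obtain ⟨h1, h2⟩ := hgrid j hj
    rw [mul_div_assoc, ← hh] at *
    have := Real.sin_pos_of_pos_of_lt_pi h1 h2
    linarith
  have hsf : Real.log (sf n k) = ∑ j ∈ Finset.Icc 1 k, flog ((j:ℝ) * h) := by
    rw [sf, Real.log_prod (fun j hj => ne_of_gt (hgridpos j hj))]
    refine Finset.sum_congr rfl fun j hj => ?_
    rw [flog, mul_div_assoc, ← hh]
  -- lob as integral of flog
  have hkh0 : (0:ℝ) ≤ (k:ℝ) * h := by positivity
  have hkhpi : (k:ℝ) * h ≤ Real.pi - h := by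
    rw [← hn1h]; have : (k:ℝ) ≤ (n:ℝ) - 1 := by linarith
    nlinarith
  have hlob : lob ((k:ℝ) * Real.pi / n) = -∫ t in (0:ℝ)..((k:ℝ)*h), flog t := by
    rw [lob, mul_div_assoc, ← hh]
    congr 1
    refine intervalIntegral.integral_congr fun t ht => ?_
    rw [Set.uIcc_of_le hkh0] at ht
    have hs : (0:ℝ) ≤ Real.sin t :=
      Real.sin_nonneg_of_nonneg_of_le_pi ht.1 (by linarith [ht.2, hkhpi])
    rw [flog, abs_of_nonneg (by linarith)]
  -- split integral
  have hint : ∀ i : ℕ, i < k →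
      IntervalIntegrable flog volume ((i:ℝ)*h) (((i:ℝ)+1)*h) := by
    intro i hi
    rcases Nat.eq_zero_or_pos i with rfl | hi0
    · have := flog_integrable0 hh0.le hhalf
      simpa using this
    · refine flog_integrable_mid (by positivity) (by nlinarith) ?_
      have hik : (i:ℝ) + 1 ≤ k := by exact_mod_cast hi
      nlinarith
  have hsplit : ∫ t in (0:ℝ)..((k:ℝ)*h), flog t
      = ∑ j ∈ Finset.range k, ∫ t in ((j:ℝ)*h)..(((j:ℝ)+1)*h), flog t := by
    have H := intervalIntegral.sum_integral_adjacent_intervals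
      (a := fun i : ℕ => (i:ℝ)*h) (μ := volume) (f := flog) (n := k)
      (fun i hi => by push_cast; exact hint i hi)
    simp only [Nat.cast_zero, zero_mul] at H
    rw [← H]
    refine Finset.sum_congr rfl fun j _ => ?_
    push_cast
    rfl
  -- main decomposition
  have key : Real.log (sf n k) + ((n:ℝ)/Real.pi) * lob ((k:ℝ) * Real.pi / n)
      = ∑ j ∈ Finset.range k, (flog (((j:ℝ)+1)*h)
          - ((n:ℝ)/Real.pi) * ∫ t in ((j:ℝ)*h)..(((j:ℝ)+1)*h), flog t) := by
    rw [hsf, hlob, hsplit, mul_neg, Finset.mul_sum, Finset.sum_sub_distrib,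
      ← sub_eq_add_neg]
    congr 1
    rw [← Finset.Ico_add_one_right_eq_Icc, Finset.sum_Ico_eq_sum_range]
    refine Finset.sum_congr (by norm_num) fun j _ => ?_
    push_cast
    ring_nf
  -- per-term bounds
  have hEbound : ∀ j ∈ Finset.range k,
      |flog (((j:ℝ)+1)*h) - ((n:ℝ)/Real.pi) * ∫ t in ((j:ℝ)*h)..(((j:ℝ)+1)*h), flog t|
        ≤ (if j = 0 then Real.log n + 1
            else (Real.pi/2) * (1/(j:ℝ) + 1/((n:ℝ)-1-(j:ℝ)))) := by
    intro j hj
    rw [Finset.mem_range] at hj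
    rcases Nat.eq_zero_or_pos j with rfl | hj0
    · -- first interval
      simp only [if_pos, Nat.cast_zero, zero_add, one_mul, zero_mul]
      have hhpi : h < Real.pi := by linarith [hhalf]
      have hs0 : 0 < Real.sin h := Real.sin_pos_of_pos_of_lt_pi hh0 hhpi
      have e2n : 2/Real.pi * h = 2/(n:ℝ) := by rw [hh]; field_simp
      have hsinh : 2/(n:ℝ) ≤ Real.sin h := e2n ▸ Real.mul_le_sin hh0.le hhalf
      have hlog4 : Real.log 4 = 2 * Real.log 2 := by
        rw [show (4:ℝ) = 2^2 by norm_num, Real.log_pow]; push_cast; ring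
      have hlogh : Real.log h = Real.log Real.pi - Real.log n := by
        rw [hh, Real.log_div (ne_of_gt hpi) (ne_of_gt hn0)]
      have hlog4pi : Real.log (4/Real.pi) = Real.log 4 - Real.log Real.pi :=
        Real.log_div (by norm_num) (ne_of_gt hpi)
      have hlog4n : Real.log (4/(n:ℝ)) = Real.log 4 - Real.log n :=
        Real.log_div (by norm_num) (ne_of_gt hn0)
      have hfh_low : Real.log (4/(n:ℝ)) ≤ flog h := by
        refine Real.log_le_log (by positivity) ?_
        rw [show (4:ℝ)/(n:ℝ) = 2 * (2/(n:ℝ)) by ring]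
        linarith
      have hfh_high : flog h ≤ Real.log 2 :=
        Real.log_le_log (by linarith) (by linarith [Real.sin_le_one h])
      have hIhigh : ∫ t in (0:ℝ)..h, flog t ≤ h * Real.log 2 := by
        have hmono := intervalIntegral.integral_mono_on (g := fun _ => Real.log 2)
          hh0.le (flog_integrable0 hh0.le hhalf) intervalIntegrable_const ?_
        · rw [intervalIntegral.integral_const, smul_eq_mul, sub_zero] at hmono
          exact hmono
        · intro t ht
          have hs : (0:ℝ) ≤ Real.sin t :=
            Real.sin_nonneg_of_nonneg_of_le_pi ht.1 (by linarith [ht.2])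
          rcases eq_or_lt_of_le hs with hz | hz
          · show flog t ≤ Real.log 2
            rw [flog, ← hz, mul_zero, Real.log_zero]
            exact (Real.log_pos (by norm_num)).le
          · exact Real.log_le_log (by linarith) (by linarith [Real.sin_le_one t])
      have hIlow : h * Real.log (4/Real.pi) + (h * Real.log h - h)
          ≤ ∫ t in (0:ℝ)..h, flog t := by
        have hgint : IntervalIntegrable (fun t => Real.log (4/Real.pi) + Real.log t)
            volume 0 h := intervalIntegrable_const.add (intervalIntegrable_log0 hh0.le)
        have hmono := intervalIntegral.integral_mono_ae_restrict
          hh0.le hgint (flog_integrable0 hh0.le hhalf) ?_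
        · have hval : ∫ t in (0:ℝ)..h, (Real.log (4/Real.pi) + Real.log t)
              = h * Real.log (4/Real.pi) + (h * Real.log h - h) := by
            rw [intervalIntegral.integral_add intervalIntegrable_const
              (intervalIntegrable_log0 hh0.le), intervalIntegral.integral_const,
              integral_log0 hh0.le, smul_eq_mul, sub_zero]
          rw [hval] at hmono
          exact hmono
        · have hne : ∀ᵐ t : ℝ ∂volume, t ≠ 0 := by
            rw [MeasureTheory.ae_iff]
            have e : {t : ℝ | ¬ t ≠ 0} = {0} := by ext t; simp
            rw [e]
            exact Real.volume_singleton
          refine (MeasureTheory.ae_restrict_iff' measurableSet_Icc).2 ?_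
          filter_upwards [hne] with t ht0 htm
          have htpos : 0 < t := lt_of_le_of_ne htm.1 (Ne.symm ht0)
          show Real.log (4/Real.pi) + Real.log t ≤ flog t
          rw [← Real.log_mul (by positivity) ht0]
          have hsin : 2/Real.pi * t ≤ Real.sin t :=
            Real.mul_le_sin htpos.le (le_trans htm.2 hhalf)
          refine Real.log_le_log (by positivity) ?_
          have hmul := mul_le_mul_of_nonneg_left hsin (by norm_num : (0:ℝ) ≤ 2)
          have e : 2 * (2/Real.pi * t) = 4/Real.pi * t := by ring
          linarith [e ▸ hmul]
      have hnp : (0:ℝ) < (n:ℝ)/Real.pi := by positivity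
      have hup : ((n:ℝ)/Real.pi) * (h * Real.log (4/Real.pi) + (h * Real.log h - h))
          ≤ ((n:ℝ)/Real.pi) * ∫ t in (0:ℝ)..h, flog t :=
        mul_le_mul_of_nonneg_left hIlow hnp.le
      have hdn : ((n:ℝ)/Real.pi) * (h * Real.log (4/Real.pi) + (h * Real.log h - h))
          = Real.log (4/Real.pi) + Real.log h - 1 := by
        rw [show ((n:ℝ)/Real.pi) * (h * Real.log (4/Real.pi) + (h * Real.log h - h))
          = (((n:ℝ)/Real.pi) * h) * (Real.log (4/Real.pi) + Real.log h - 1) by ring, hnh]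
        ring
      have hdown : ((n:ℝ)/Real.pi) * ∫ t in (0:ℝ)..h, flog t
          ≤ ((n:ℝ)/Real.pi) * (h * Real.log 2) :=
        mul_le_mul_of_nonneg_left hIhigh hnp.le
      have hdn2 : ((n:ℝ)/Real.pi) * (h * Real.log 2) = Real.log 2 := by
        rw [← mul_assoc, hnh, one_mul]
      have hlog2pos : (0:ℝ) < Real.log 2 := Real.log_pos (by norm_num)
      rw [abs_le]
      constructor
      · rw [hdn2] at hdown
        rw [hlog4n, hlog4] at hfh_low
        linarith
      · rw [hdn] at hup
        rw [hlog4pi, hlogh, hlog4] at hup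
        linarith
    · -- interior intervals
      rw [if_neg (by omega)]
      have hj1 : (1:ℝ) ≤ (j:ℝ) := by exact_mod_cast hj0
      have hjk : (j:ℝ) + 1 ≤ (k:ℝ) := by exact_mod_cast hj
      set a := (j:ℝ)*h with ha_def
      set b := ((j:ℝ)+1)*h with hb_def
      have ha : 0 < a := by rw [ha_def]; nlinarith
      have hab : a ≤ b := by rw [ha_def, hb_def]; nlinarith
      have hbk : b ≤ (k:ℝ)*h := by
        rw [hb_def]; exact mul_le_mul_of_nonneg_right hjk hh0.le
      have hbpi : b < Real.pi := by linarith [hkhpi]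
      have hpb : 0 < Real.pi - b := by linarith
      have hd1 : (0:ℝ) < (n:ℝ) - 1 - (j:ℝ) := by linarith
      have hepb : Real.pi - b = ((n:ℝ)-1-(j:ℝ))*h := by
        rw [show Real.pi = ((n:ℝ)-1)*h + h by linarith [hn1h], hb_def]; ring
      set M := (Real.pi/2) * (1/a + 1/(Real.pi - b)) with hM_def
      have hM : ∀ t ∈ Set.Icc a b, 1 / Real.sin t ≤ M := by
        intro t ht
        refine le_trans (one_div_sin_le (lt_of_lt_of_le ha ht.1)
          (lt_of_le_of_lt ht.2 hbpi)) ?_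
        rw [hM_def]
        have h1 : 1/t ≤ 1/a := one_div_le_one_div_of_le ha ht.1
        have h2 : 1/(Real.pi - t) ≤ 1/(Real.pi - b) :=
          one_div_le_one_div_of_le hpb (by linarith [ht.2])
        nlinarith
      have hlip := flog_lip ha hab hbpi hM
      have hfint : IntervalIntegrable flog volume a b := flog_integrable_mid ha hab hbpi
      have hba : b - a = h := by rw [ha_def, hb_def]; ring
      have e1 : ∫ t in a..b, (flog b - flog t)
          = h * flog b - ∫ t in a..b, flog t := by
        rw [intervalIntegral.integral_sub intervalIntegrable_const hfint,
          intervalIntegral.integral_const, smul_eq_mul, hba]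
      have e2 : flog b - ((n:ℝ)/Real.pi) * ∫ t in a..b, flog t
          = ((n:ℝ)/Real.pi) * ∫ t in a..b, (flog b - flog t) := by
        rw [e1, mul_sub, ← mul_assoc, hnh, one_mul]
      have hnormb : ∀ x ∈ Set.uIoc a b, ‖flog b - flog x‖ ≤ M * h := by
        intro x hx
        rw [Set.uIoc_of_le hab] at hx
        have hxm : x ∈ Set.Icc a b := ⟨hx.1.le, hx.2⟩
        rw [Real.norm_eq_abs]
        calc |flog b - flog x| ≤ M * (b - a) := hlip x hxm
          _ = M * h := by rw [hba]
      have hnorm := intervalIntegral.norm_integral_le_of_norm_le_const hnormb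
      rw [Real.norm_eq_abs] at hnorm
      have habsba : |b - a| = h := by rw [hba, abs_of_pos hh0]
      rw [habsba] at hnorm
      have hnp : (0:ℝ) ≤ (n:ℝ)/Real.pi := by positivity
      have hfinal : |flog b - ((n:ℝ)/Real.pi) * ∫ t in a..b, flog t|
          ≤ ((n:ℝ)/Real.pi) * (M * h * h) := by
        rw [e2, abs_mul, abs_of_nonneg hnp]
        exact mul_le_mul_of_nonneg_left hnorm hnp
      refine le_trans hfinal ?_
      have heq : ((n:ℝ)/Real.pi) * (M * h * h) = M * h := by
        rw [show ((n:ℝ)/Real.pi) * (M * h * h) = (((n:ℝ)/Real.pi) * h) * (M * h) by ring,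
          hnh, one_mul]
      rw [heq, hM_def, hepb, ha_def]
      have hjpos : (0:ℝ) < (j:ℝ) := by linarith
      rw [show (Real.pi/2) * (1/((j:ℝ)*h) + 1/(((n:ℝ)-1-(j:ℝ))*h)) * h
        = (Real.pi/2) * (h/((j:ℝ)*h) + h/(((n:ℝ)-1-(j:ℝ))*h)) by ring]
      rw [show h/((j:ℝ)*h) = 1/(j:ℝ) by rw [mul_comm, ← div_div, div_self hh0.ne']]
      rw [show h/(((n:ℝ)-1-(j:ℝ))*h) = 1/((n:ℝ)-1-(j:ℝ)) by
        rw [mul_comm, ← div_div, div_self hh0.ne']]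
  -- sum the bounds
  have hsum : ∑ j ∈ Finset.range k, (if j = 0 then Real.log n + 1
        else (Real.pi/2) * (1/(j:ℝ) + 1/((n:ℝ)-1-(j:ℝ))))
      ≤ (Real.log n + 1) + Real.pi * (1 + Real.log n) := by
    rw [Finset.range_eq_Ico, Finset.sum_eq_sum_Ico_succ_bot (by omega : 0 < k)]
    rw [if_pos rfl]
    have hrest : ∑ j ∈ Finset.Ico 1 k, (if j = 0 then Real.log n + 1
          else (Real.pi/2) * (1/(j:ℝ) + 1/((n:ℝ)-1-(j:ℝ))))
        = (Real.pi/2) * ((∑ j ∈ Finset.Ico 1 k, 1/(j:ℝ))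
            + ∑ j ∈ Finset.Ico 1 k, 1/((n:ℝ)-1-(j:ℝ))) := by
      rw [← Finset.sum_add_distrib, Finset.mul_sum]
      refine Finset.sum_congr rfl fun j hj => ?_
      rw [Finset.mem_Ico] at hj
      rw [if_neg (by omega), mul_add]
    rw [hrest]
    have hA : ∑ j ∈ Finset.Ico 1 k, 1/(j:ℝ) ≤ 1 + Real.log n := by
      refine le_trans (Finset.sum_le_sum_of_subset_of_nonneg ?_ ?_) (harmonic_le n)
      · intro x hx
        rw [Finset.mem_Ico] at hx
        rw [Finset.mem_Icc]
        omega
      · intro i _ _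
        positivity
    have hB : ∑ j ∈ Finset.Ico 1 k, 1/((n:ℝ)-1-(j:ℝ)) ≤ 1 + Real.log n := by
      have hcast : ∑ j ∈ Finset.Ico 1 k, 1/((n:ℝ)-1-(j:ℝ))
          = ∑ j ∈ Finset.Ico 1 k, (1:ℝ)/((n - 1 - j : ℕ):ℝ) := by
        refine Finset.sum_congr rfl fun j hj => ?_
        rw [Finset.mem_Ico] at hj
        rw [Nat.cast_sub (by omega), Nat.cast_sub (by omega), Nat.cast_one]
      rw [hcast]
      rw [← Finset.sum_image (g := fun j => n - 1 - j) (f := fun i : ℕ => (1:ℝ)/(i:ℝ))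
        (by intro x hx y hy hxy
            rw [Finset.mem_coe, Finset.mem_Ico] at hx hy
            simp only at hxy
            omega)]
      refine le_trans (Finset.sum_le_sum_of_subset_of_nonneg ?_ ?_) (harmonic_le n)
      · intro x hx
        rw [Finset.mem_image] at hx
        obtain ⟨y, hy, rfl⟩ := hx
        rw [Finset.mem_Ico] at hy
        rw [Finset.mem_Icc]
        show 1 ≤ n - 1 - y ∧ n - 1 - y ≤ n
        omega
      · intro i _ _
        positivity
    have hpi2 : (0:ℝ) < Real.pi/2 := by positivity
    nlinarith [mul_le_mul_of_nonneg_left (add_le_add hA hB) hpi2.le]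
  -- finish
  have habs : |Real.log (sf n k) + ((n:ℝ)/Real.pi) * lob ((k:ℝ) * Real.pi / n)|
      ≤ (Real.log n + 1) + Real.pi * (1 + Real.log n) := by
    rw [key]
    refine le_trans (Finset.abs_sum_le_sum_abs _ _) (le_trans (Finset.sum_le_sum hEbound) hsum)
  have hlog2 : Real.log 2 ≤ Real.log n := Real.log_le_log (by norm_num) hn2
  have hl2 := Real.log_two_gt_d9
  have hpilt := Real.pi_lt_d2
  refine le_trans habs ?_
  nlinarith [Real.log_nonneg (by linarith : (1:ℝ) ≤ (n:ℝ))]
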